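/- Let n, m ≥ 1 and 1 ≤ ℓ < m. There is a constant C, depending only on n and m, such that for every y ∈ ℝ^n, every r > 0, every x ∈ B(y,r), and all nonnegative measurable functions f_1,…,f_m on ℝ^n: ∫_{((ℝ^n)^ℓ ∖ B(y,2r)^ℓ) × B(y,2r)^{m−ℓ}} [Π_{k=1}^m f_k(z_k)] / (Σ_{k=1}^m |x−z_k|)^{mn} dz_1…dz_m ≤ C Σ_{j=1}^∞ Π_{k=1}^m ( |B(y,2^{j+1}r)|^{−1} ∫_{B(y,2^{j+1}r)} f_k ), where the domain of integration consists of tuples (z_1,…,z_m) with (z_1,…,z_ℓ) ∉ B(y,2r)^ℓ and z_{ℓ+1},…,z_m ∈ B(y,2r). -/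

import Mathlib

open MeasureTheory Metric ENNReal

noncomputable section

/-- Euclidean space `ℝ^n`. -/
abbrev Rn (n : ℕ) : Type := EuclideanSpace ℝ (Fin n)

/-- A weight on `ℝ^n`: a measurable, everywhere positive, locally integrable function. -/
def IsWeight {n : ℕ} (w : Rn n → ℝ) : Prop :=
  Measurable w ∧ (∀ x, 0 < w x) ∧ LocallyIntegrable w volume

/-- The weighted measure `w(E) = ∫_E w` of a set `E`, as an extended nonnegative real. -/
def wtMass {n : ℕ} (w : Rn n → ℝ) (E : Set (Rn n)) : ℝ≥0∞ :=
  ∫⁻ x in E, ENNReal.ofReal (w x)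

/-- The weighted `L^p` norm of `f` restricted to a set `E`:
`(∫_E |f|^p w)^(1/p)`. -/
def wtLpOn {n : ℕ} (p : ℝ) (w : Rn n → ℝ) (E : Set (Rn n)) (f : Rn n → ℝ) : ℝ≥0∞ :=
  (∫⁻ x in E, ENNReal.ofReal |f x| ^ p * ENNReal.ofReal (w x)) ^ (1 / p)

/-- The weighted `L^p` norm `‖f‖_{L^p(w)}` on all of `ℝ^n`. -/
def wtLp {n : ℕ} (p : ℝ) (w : Rn n → ℝ) (f : Rn n → ℝ) : ℝ≥0∞ :=
  wtLpOn p w Set.univ f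

/-- The weighted weak `L^p` quasinorm of `f` restricted to a set `E`:
`sup_{t>0} t · w({x ∈ E : |f x| > t})^(1/p)`. -/
def wtWLpOn {n : ℕ} (p : ℝ) (w : Rn n → ℝ) (E : Set (Rn n)) (f : Rn n → ℝ) : ℝ≥0∞ :=
  ⨆ (t : ℝ) (_ : 0 < t), ENNReal.ofReal t * wtMass w {x ∈ E | t < |f x|} ^ (1 / p)

/-- The weighted weak `L^p` quasinorm `‖f‖_{WL^p(w)}` on all of `ℝ^n`. -/
def wtWLp {n : ℕ} (p : ℝ) (w : Rn n → ℝ) (f : Rn n → ℝ) : ℝ≥0∞ :=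
  wtWLpOn p w Set.univ f

/-- The weighted amalgam norm `‖f‖_{(L^p,L^q)^α(w;μ)}`. -/
def amalgamNorm {n : ℕ} (p q α : ℝ) (w μ : Rn n → ℝ) (f : Rn n → ℝ) : ℝ≥0∞ :=
  ⨆ (r : ℝ) (_ : 0 < r),
    (∫⁻ y, (wtMass w (ball y r) ^ (1/α - 1/p - 1/q) * wtLpOn p w (ball y r) f) ^ q *
      ENNReal.ofReal (μ y)) ^ (1/q)

/-- The weighted weak amalgam norm `‖f‖_{(WL^p,L^q)^α(w;μ)}`. -/
def wAmalgamNorm {n : ℕ} (p q α : ℝ) (w μ : Rn n → ℝ) (f : Rn n → ℝ) : ℝ≥0∞ :=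
  ⨆ (r : ℝ) (_ : 0 < r),
    (∫⁻ y, (wtMass w (ball y r) ^ (1/α - 1/p - 1/q) * wtWLpOn p w (ball y r) f) ^ q *
      ENNReal.ofReal (μ y)) ^ (1/q)

/-- The product weight `ν_{w⃗} = ∏_k w_k^{p/p_k}`. -/
def nuW {n m : ℕ} (p : ℝ) (pk : Fin m → ℝ) (w : Fin m → Rn n → ℝ) : Rn n → ℝ :=
  fun x => ∏ k, w k x ^ (p / pk k)

/-- The `k`-th factor in the multilinear `A_{P⃗}` condition on a set `B`:
`(|B|⁻¹ ∫_B w^{-p'/p})^{1/p'}` when `p > 1` (note `p'/p = 1/(p-1)` and `1/p' = (p-1)/p`),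
and `(essinf_B w)⁻¹` when `p = 1`. -/
def apFactor {n : ℕ} (pk : ℝ) (w : Rn n → ℝ) (B : Set (Rn n)) : ℝ≥0∞ :=
  if pk = 1 then (essInf (fun x => ENNReal.ofReal (w x)) (volume.restrict B))⁻¹
  else ((volume B)⁻¹ * ∫⁻ x in B, ENNReal.ofReal (w x ^ (-(1 / (pk - 1))))) ^ ((pk - 1) / pk)

/-- The multilinear `A_{P⃗}` condition with constant `CW`. -/
def MultiAP {n m : ℕ} (p : ℝ) (pk : Fin m → ℝ) (w : Fin m → Rn n → ℝ) (CW : ℝ) : Prop :=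
  ∀ (y : Rn n) (r : ℝ), 0 < r →
    ((volume (ball y r))⁻¹ * wtMass (nuW p pk w) (ball y r)) ^ (1/p) *
      (∏ k, apFactor (pk k) (w k) (ball y r)) ≤ ENNReal.ofReal CW

/-- The `A_∞`-comparison condition with constants `Cc`, `δ`. -/
def AinfCompare {n : ℕ} (w : Rn n → ℝ) (Cc δ : ℝ) : Prop :=
  ∀ (y : Rn n) (r : ℝ), 0 < r → ∀ E : Set (Rn n), MeasurableSet E → E ⊆ ball y r →
    wtMass w E ≤ ENNReal.ofReal Cc * (volume E / volume (ball y r)) ^ δ * wtMass w (ball y r)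

/-- Doubling condition with constant `Cd`. -/
def DoublingWt {n : ℕ} (w : Rn n → ℝ) (Cd : ℝ) : Prop :=
  ∀ (y : Rn n) (r : ℝ), 0 < r →
    wtMass w (ball y (2*r)) ≤ ENNReal.ofReal Cd * wtMass w (ball y r)

/-- Reverse Jensen inequality with constant `CJ`. -/
def RevJensen {n : ℕ} (w : Rn n → ℝ) (CJ : ℝ) : Prop :=
  LocallyIntegrable (fun x => Real.log (w x)) volume ∧
  ∀ (y : Rn n) (r : ℝ), 0 < r →
    (∫ x in ball y r, w x) ≤
      CJ * (volume (ball y r)).toReal *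
        Real.exp ((volume (ball y r)).toReal⁻¹ * ∫ x in ball y r, Real.log (w x))

/-- `T` is a.e. `m`-linear. -/
def AEMultilinear {n m : ℕ} (T : (Fin m → Rn n → ℝ) → Rn n → ℝ) : Prop :=
  ∀ g : Fin m → Rn n → ℝ, (∀ k, Measurable (g k)) →
    ∀ (k : Fin m) (c : ℝ) (h : Rn n → ℝ), Measurable h →
      ∀ᵐ x ∂(volume : Measure (Rn n)),
        T (Function.update g k (fun y => c * g k y + h y)) x =
          c * T g x + T (Function.update g k h) x

/-- The complement of the essential support of `g`: the union of all open sets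
on which `g` vanishes almost everywhere. -/
def essSuppCompl {n : ℕ} (g : Rn n → ℝ) : Set (Rn n) :=
  {x | ∃ U : Set (Rn n), IsOpen U ∧ x ∈ U ∧ ∀ᵐ y ∂(volume.restrict U), g y = 0}

/-- The multilinear size property with constant `A`: for a.e. `x` outside the essential
support of one of the entries, `|T(g⃗)(x)|` is dominated by the standard multilinear
fractional kernel applied to `|g_k|`. -/
def SizeProp {n m : ℕ} (T : (Fin m → Rn n → ℝ) → Rn n → ℝ) (A : ℝ) : Prop :=
  ∀ g : Fin m → Rn n → ℝ, (∀ k, Measurable (g k)) → ∀ k₀ : Fin m,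
    ∀ᵐ x ∂(volume.restrict (essSuppCompl (g k₀))),
      ENNReal.ofReal |T g x| ≤ ENNReal.ofReal A *
        ∫⁻ z : Fin m → Rn n,
          (∏ k, ENNReal.ofReal |g k (z k)|) /
            ENNReal.ofReal ((∑ k, dist x (z k)) ^ (m * n))

/-- `b_B`: the average of `b` over the ball `B(y,r)`. -/
def ballAvg {n : ℕ} (b : Rn n → ℝ) (y : Rn n) (r : ℝ) : ℝ :=
  (volume (ball y r)).toReal⁻¹ * ∫ x in ball y r, b x

/-- The BMO seminorm of `b` is bounded by `M`. -/
def BMOBound {n : ℕ} (b : Rn n → ℝ) (M : ℝ) : Prop :=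
  ∀ (y : Rn n) (r : ℝ), 0 < r →
    (volume (ball y r)).toReal⁻¹ * (∫ x in ball y r, |b x - ballAvg b y r|) ≤ M

/-- The commutator `[b,T]_k` in the `k`-th slot. -/
def commAt {n m : ℕ} (b : Rn n → ℝ) (k : Fin m)
    (T : (Fin m → Rn n → ℝ) → Rn n → ℝ) : (Fin m → Rn n → ℝ) → Rn n → ℝ :=
  fun f x => b x * T f x - T (Function.update f k (fun y => b y * f k y)) x

/-- The multilinear commutator `[Σb⃗, T] = Σ_k [b_k,T]_k`. -/
def sumComm {n m : ℕ} (b : Fin m → Rn n → ℝ)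
    (T : (Fin m → Rn n → ℝ) → Rn n → ℝ) : (Fin m → Rn n → ℝ) → Rn n → ℝ :=
  fun f x => ∑ k, commAt (b k) k T f x

/-- The iterated commutator `[Πb⃗, T] = [b_1,[b_2,…[b_{m-1},[b_m,T]_m]_{m-1}…]_2]_1`. -/
def iterComm {n m : ℕ} (b : Fin m → Rn n → ℝ)
    (T : (Fin m → Rn n → ℝ) → Rn n → ℝ) : (Fin m → Rn n → ℝ) → Rn n → ℝ :=
  (List.finRange m).foldr (fun k S => commAt (b k) k S) T

/-- `Φ(t) = t(1 + log⁺ t)`. -/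
def phiLL (t : ℝ) : ℝ := t * (1 + max (Real.log t) 0)

/-- The `L log L` Luxemburg norm of `f` over `B` with respect to the weight `w`:
`inf {σ > 0 : w(B)⁻¹ ∫_B Φ(|f|/σ) w ≤ 1}` (equal to `⊤` if no such `σ` exists). -/
def llogLOn {n : ℕ} (w : Rn n → ℝ) (B : Set (Rn n)) (f : Rn n → ℝ) : ℝ≥0∞ :=
  sInf {σ : ℝ≥0∞ | ∃ s : ℝ, 0 < s ∧ σ = ENNReal.ofReal s ∧
    (wtMass w B)⁻¹ *
      (∫⁻ x in B, ENNReal.ofReal (phiLL (|f x| / s)) * ENNReal.ofReal (w x)) ≤ 1}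

/-- The weighted amalgam norm of `L log L` type, `‖f‖_{(L log L, L^q)^α(w;μ)}`. -/
def llogLAmalgam {n : ℕ} (q α : ℝ) (w μ : Rn n → ℝ) (f : Rn n → ℝ) : ℝ≥0∞ :=
  ⨆ (r : ℝ) (_ : 0 < r),
    (∫⁻ y, (wtMass w (ball y r) ^ (1/α - 1/q) * llogLOn w (ball y r) f) ^ q *
      ENNReal.ofReal (μ y)) ^ (1/q)

/-- Reverse Hölder inequality with exponent `s` and constant `CR`. -/
def RevHolder {n : ℕ} (w : Rn n → ℝ) (s CR : ℝ) : Prop :=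
  ∀ (y : Rn n) (r : ℝ), 0 < r →
    ((volume (ball y r))⁻¹ * ∫⁻ x in ball y r, ENNReal.ofReal (w x ^ s)) ^ (1/s) ≤
      ENNReal.ofReal CR * ((volume (ball y r))⁻¹ * wtMass w (ball y r))

private lemma lintegral_fin_prod_aux {N : ℕ} {E : Fin N → Type*}
    [∀ i, MeasureSpace (E i)] [∀ i, SigmaFinite (volume : Measure (E i))]
    (f : ∀ i, E i → ℝ≥0∞) (hf : ∀ i, Measurable (f i)) :
    ∫⁻ x : ∀ i, E i, ∏ i, f i (x i) = ∏ i, ∫⁻ x, f i x := by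
  induction N with
  | zero =>
      simp [volume_pi, lintegral_const]
  | succ N ih =>
      calc
        ∫⁻ x : ∀ i, E i, ∏ i, f i (x i)
            = ∫⁻ x : E 0 × ((i : Fin N) → E (Fin.succ i)),
              f 0 x.1 * ∏ i : Fin N, f (Fin.succ i) (x.2 i)
              ∂((volume : Measure (E 0)).prod
                (Measure.pi fun i : Fin N => (volume : Measure (E (Fin.succ i))))) := by
          rw [volume_pi, ((measurePreserving_piFinSuccAbove
            (fun i => (volume : Measure (E i))) 0).symm).lintegral_map_equiv]
          simp_rw [MeasurableEquiv.piFinSuccAbove_symm_apply, Fin.insertNthEquiv,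
            Fin.prod_univ_succ, Fin.insertNth_zero, Equiv.coe_fn_mk, Fin.cons_succ]
          rfl
        _ = (∫⁻ x, f 0 x) * ∏ i : Fin N, ∫⁻ x, f (Fin.succ i) x := by
          rw [← ih (fun i => f (Fin.succ i)) (fun i => hf _), volume_pi]
          exact lintegral_prod_mul (f := f 0)
            (g := fun v : (i : Fin N) → E (Fin.succ i) => ∏ i, f (Fin.succ i) (v i))
            (hf 0).aemeasurable
            (Finset.measurable_prod Finset.univ
              (fun i _ => (hf _).comp (measurable_pi_apply i))).aemeasurable
        _ = ∏ i, ∫⁻ x, f i x := by rw [Fin.prod_univ_succ]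

private lemma lintegral_pi_set_prod {n m : ℕ} (B : Set (Rn n)) (hB : MeasurableSet B)
    (f : Fin m → Rn n → ℝ≥0∞) (hf : ∀ k, Measurable (f k)) :
    ∫⁻ z in Set.univ.pi (fun _ : Fin m => B), ∏ k, f k (z k) = ∏ k, ∫⁻ u in B, f k u := by
  have hmeas : MeasurableSet (Set.univ.pi fun _ : Fin m => B) :=
    MeasurableSet.univ_pi fun _ => hB
  rw [← lintegral_indicator hmeas]
  have hind : ∀ z : Fin m → Rn n,
      (Set.univ.pi fun _ : Fin m => B).indicator (fun z => ∏ k, f k (z k)) z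
        = ∏ k, B.indicator (f k) (z k) := by
    intro z
    by_cases h : z ∈ Set.univ.pi fun _ : Fin m => B
    · rw [Set.indicator_of_mem h]
      exact Finset.prod_congr rfl fun k _ =>
        (Set.indicator_of_mem (Set.mem_univ_pi.1 h k) _).symm
    · rw [Set.indicator_of_notMem h]
      obtain ⟨k, hk⟩ : ∃ k, z k ∉ B := by
        by_contra hc; push_neg at hc; exact h (Set.mem_univ_pi.2 hc)
      exact (Finset.prod_eq_zero (Finset.mem_univ k)
        (Set.indicator_of_notMem hk _)).symm
  simp_rw [hind]
  rw [lintegral_fin_prod_aux _ (fun k => (hf k).indicator hB)]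
  exact Finset.prod_congr rfl fun k _ => lintegral_indicator hB _

/-- the multilinear kernel integral over
`((ℝ^n)^ℓ ∖ B(y,2r)^ℓ) × B(y,2r)^{m-ℓ}` is dominated by the sum of products of averages
over the dyadic dilates `B(y,2^{j+1}r)`, `j ≥ 1`. -/
theorem multilinear_kernel_mixed_annuli_bound
    {n m : ℕ} (hn : 1 ≤ n) (hm : 1 ≤ m) (ℓ : ℕ) (hℓ₁ : 1 ≤ ℓ) (hℓ₂ : ℓ < m) :
    ∃ C : ℝ, 0 < C ∧ ∀ (y : Rn n) (r : ℝ), 0 < r → ∀ x ∈ ball y r,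
      ∀ f : Fin m → Rn n → ℝ≥0∞, (∀ k, Measurable (f k)) →
      (∫⁻ z in {z : Fin m → Rn n |
            (¬ ∀ k : Fin m, (k:ℕ) < ℓ → z k ∈ ball y (2*r)) ∧
            (∀ k : Fin m, ℓ ≤ (k:ℕ) → z k ∈ ball y (2*r))},
          (∏ k, f k (z k)) / ENNReal.ofReal ((∑ k, dist x (z k)) ^ (m * n))) ≤
        ENNReal.ofReal C *
          ∑' j : ℕ, ∏ k,
            (volume (ball y ((2:ℝ)^(j+2) * r)))⁻¹ *
              ∫⁻ u in ball y ((2:ℝ)^(j+2) * r), f k u := by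
  classical
  set V : ℝ≥0∞ := volume (ball (0 : Rn n) 1) with hV_def
  have hV0 : 0 < V := measure_ball_pos volume 0 one_pos
  have hVtop : V ≠ ⊤ := measure_ball_lt_top.ne
  have hVt0 : 0 < V.toReal := ENNReal.toReal_pos hV0.ne' hVtop
  refine ⟨(4:ℝ) ^ (m*n) * V.toReal ^ m, by positivity, ?_⟩
  intro y r hr x hx f hf
  set S : Set (Fin m → Rn n) := {z : Fin m → Rn n |
      (¬ ∀ k : Fin m, (k:ℕ) < ℓ → z k ∈ ball y (2*r)) ∧
      (∀ k : Fin m, ℓ ≤ (k:ℕ) → z k ∈ ball y (2*r))} with hS_def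
  set A : ℕ → Set (Fin m → Rn n) := fun j =>
    {z : Fin m → Rn n | (∀ k, z k ∈ ball y ((2:ℝ)^(j+2) * r)) ∧
      ∃ k, (2:ℝ)^(j+1) * r ≤ dist (z k) y} with hA_def
  -- the cover
  have hcover : S ⊆ ⋃ j, A j := by
    rintro z ⟨h1, _⟩
    push_neg at h1
    obtain ⟨k0, _, hk0⟩ := h1
    have hk0' : 2 * r ≤ dist (z k0) y := not_lt.1 (fun h => hk0 (mem_ball.2 h))
    have : Nonempty (Fin m) := ⟨k0⟩
    obtain ⟨k1, -, hk1⟩ := Finset.exists_mem_eq_sup' (Finset.univ_nonempty (α := Fin m))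
      (fun k => dist (z k) y)
    set M : ℝ := dist (z k1) y with hM_def
    have hMk : ∀ k, dist (z k) y ≤ M := fun k =>
      hk1 ▸ Finset.le_sup' (fun k => dist (z k) y) (Finset.mem_univ k)
    have hM2r : 2 * r ≤ M := le_trans hk0' (hMk k0)
    have h2r0 : (0:ℝ) < 2 * r := by positivity
    set t : ℝ := M / (2 * r) with ht_def
    have ht1 : 1 ≤ t := (one_le_div h2r0).2 hM2r
    set j : ℕ := (Int.log 2 t).toNat with hj_def
    have hlog0 : 0 ≤ Int.log 2 t := by
      rw [Int.log_of_one_le_right _ ht1]; exact Int.natCast_nonneg _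
    have hjz : ((j : ℤ)) = Int.log 2 t := Int.toNat_of_nonneg hlog0
    have h2jle : (2:ℝ) ^ j ≤ t := by
      have h := Int.zpow_log_le_self (b := 2) (R := ℝ) (by norm_num)
        (lt_of_lt_of_le one_pos ht1)
      rw [← hjz, zpow_natCast] at h
      exact_mod_cast h
    have hlt : t < (2:ℝ) ^ (j + 1) := by
      have h := Int.lt_zpow_succ_log_self (b := 2) (R := ℝ) (by norm_num) t
      rw [← hjz, ← Nat.cast_one, ← Nat.cast_add, zpow_natCast] at h
      exact_mod_cast h
    have hMeq : M = t * (2 * r) := by rw [ht_def, div_mul_cancel₀ _ h2r0.ne']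
    refine Set.mem_iUnion.2 ⟨j, ?_, ?_⟩
    · intro k
      have hMlt : M < (2:ℝ) ^ (j+2) * r := by
        have h1 : t * (2 * r) < (2:ℝ) ^ (j+1) * (2 * r) := by nlinarith
        have h2 : (2:ℝ) ^ (j+1) * (2 * r) = 2 ^ (j+2) * r := by ring
        rw [hMeq]; linarith
      exact mem_ball.2 (lt_of_le_of_lt (hMk k) hMlt)
    · refine ⟨k1, ?_⟩
      have : (2:ℝ) ^ (j+1) * r ≤ M := by
        have h1 : (2:ℝ)^j * (2 * r) ≤ t * (2 * r) := by nlinarith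
        have h2 : (2:ℝ)^j * (2 * r) = 2 ^ (j+1) * r := by ring
        rw [hMeq]; linarith
      exact this
  -- per-annulus bound
  have hterm : ∀ j : ℕ,
      (∫⁻ z in A j, (∏ k, f k (z k)) / ENNReal.ofReal ((∑ k, dist x (z k)) ^ (m * n))) ≤
        ENNReal.ofReal ((4:ℝ) ^ (m*n) * V.toReal ^ m) *
          ∏ k, (volume (ball y ((2:ℝ)^(j+2) * r)))⁻¹ *
            ∫⁻ u in ball y ((2:ℝ)^(j+2) * r), f k u := by
    intro j
    set B : Set (Rn n) := ball y ((2:ℝ)^(j+2) * r) with hB_def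
    set a : ℝ := ((2:ℝ)^j * r) ^ (m * n) with ha_def
    have ha0 : 0 < a := by positivity
    set c : ℝ≥0∞ := (ENNReal.ofReal a)⁻¹ with hc_def
    have hctop : c ≠ ⊤ := by
      simp [hc_def, ENNReal.inv_ne_top, ENNReal.ofReal_pos.2 ha0, ne_of_gt]
    have hprod_meas : Measurable fun z : Fin m → Rn n => ∏ k, f k (z k) :=
      Finset.measurable_prod Finset.univ fun k _ => (hf k).comp (measurable_pi_apply k)
    have hxy : dist x y < r := mem_ball.1 hx
    -- pointwise kernel bound on A j
    have hpt : ∀ z ∈ A j,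
        (∏ k, f k (z k)) / ENNReal.ofReal ((∑ k, dist x (z k)) ^ (m * n)) ≤
          (∏ k, f k (z k)) * c := by
      rintro z ⟨-, k1, hk1⟩
      have h2j1 : (1:ℝ) ≤ 2 ^ j := one_le_pow₀ (by norm_num : (1:ℝ) ≤ 2)
      have htri : dist (z k1) y ≤ dist x (z k1) + dist x y := by
        rw [dist_comm x (z k1)]; exact dist_triangle _ _ _
      have hpow_succ : (2:ℝ) ^ (j+1) = 2 * 2 ^ j := by ring
      have hdist1 : (2:ℝ)^j * r ≤ dist x (z k1) := by nlinarith
      have hsum : (2:ℝ)^j * r ≤ ∑ k, dist x (z k) :=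
        le_trans hdist1 (Finset.single_le_sum (fun k _ => dist_nonneg) (Finset.mem_univ k1))
      have hpow : a ≤ (∑ k, dist x (z k)) ^ (m * n) :=
        pow_le_pow_left₀ (by positivity) hsum (m*n)
      have hinv : (ENNReal.ofReal ((∑ k, dist x (z k)) ^ (m * n)))⁻¹ ≤ c :=
        ENNReal.inv_le_inv' (ENNReal.ofReal_le_ofReal hpow)
      rw [div_eq_mul_inv]
      exact mul_le_mul_right hinv _
    have hBmeas : MeasurableSet B := measurableSet_ball
    have hAsub : A j ⊆ Set.univ.pi (fun _ : Fin m => B) := by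
      rintro z ⟨h1, -⟩
      exact Set.mem_univ_pi.2 h1
    have hvol : volume B = ENNReal.ofReal (((2:ℝ)^(j+2) * r) ^ n) * V := by
      rw [hB_def, Measure.addHaar_ball_of_pos volume y (by positivity), finrank_euclideanSpace_fin]
    have hv0 : volume B ≠ 0 := (measure_ball_pos volume y (by positivity)).ne'
    have hvtop : volume B ≠ ⊤ := measure_ball_lt_top.ne
    -- key constant computation : c * (volume B)^m = ofReal C
    have hkey : c * (volume B) ^ m = ENNReal.ofReal ((4:ℝ) ^ (m*n) * V.toReal ^ m) := by
      have hb : (((2:ℝ)^(j+2) * r) ^ n) ^ m = (4:ℝ)^(m*n) * a := by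
        rw [ha_def, ← pow_mul, ← mul_pow, mul_comm n m]
        congr 1
        ring
      have hVm : V ^ m = ENNReal.ofReal (V.toReal ^ m) := by
        rw [ENNReal.ofReal_pow ENNReal.toReal_nonneg, ENNReal.ofReal_toReal hVtop]
      rw [hvol, mul_pow, ← ENNReal.ofReal_pow (by positivity), hb, hc_def,
        ENNReal.ofReal_mul (by positivity), hVm, ← mul_assoc, ← mul_assoc,
        ENNReal.ofReal_mul (by positivity)]
      congr 1
      rw [mul_comm (ENNReal.ofReal a)⁻¹, mul_assoc, ENNReal.inv_mul_cancel
        (ENNReal.ofReal_pos.2 ha0).ne' ENNReal.ofReal_ne_top, mul_one]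
    have hcle : c ≤ ENNReal.ofReal ((4:ℝ) ^ (m*n) * V.toReal ^ m) * ((volume B)⁻¹) ^ m := by
      have hm0 : (volume B) ^ m ≠ 0 := pow_ne_zero m hv0
      have hmtop : (volume B) ^ m ≠ ⊤ := ENNReal.pow_ne_top hvtop
      have heq : c = ENNReal.ofReal ((4:ℝ) ^ (m*n) * V.toReal ^ m) * ((volume B)⁻¹) ^ m :=
        calc c = c * ((volume B) ^ m * ((volume B) ^ m)⁻¹) := by
              rw [ENNReal.mul_inv_cancel hm0 hmtop, mul_one]
          _ = (c * (volume B) ^ m) * ((volume B) ^ m)⁻¹ := by ring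
          _ = ENNReal.ofReal ((4:ℝ) ^ (m*n) * V.toReal ^ m) * ((volume B)⁻¹) ^ m := by
              rw [hkey, ENNReal.inv_pow]
      exact heq.le

    calc (∫⁻ z in A j, (∏ k, f k (z k)) / ENNReal.ofReal ((∑ k, dist x (z k)) ^ (m * n)))
        ≤ ∫⁻ z in A j, (∏ k, f k (z k)) * c :=
          setLIntegral_mono (hprod_meas.mul_const c) hpt
      _ ≤ ∫⁻ z in Set.univ.pi (fun _ : Fin m => B), (∏ k, f k (z k)) * c :=
          lintegral_mono_set hAsub
      _ = (∫⁻ z in Set.univ.pi (fun _ : Fin m => B), ∏ k, f k (z k)) * c :=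
          lintegral_mul_const' c _ hctop
      _ = (∏ k, ∫⁻ u in B, f k u) * c := by
          rw [lintegral_pi_set_prod B hBmeas f hf]
      _ = c * ∏ k, ∫⁻ u in B, f k u := mul_comm _ _
      _ ≤ (ENNReal.ofReal ((4:ℝ) ^ (m*n) * V.toReal ^ m) * ((volume B)⁻¹) ^ m) *
            ∏ k, ∫⁻ u in B, f k u := mul_le_mul_left hcle _
      _ = ENNReal.ofReal ((4:ℝ) ^ (m*n) * V.toReal ^ m) *
            ∏ k, (volume B)⁻¹ * ∫⁻ u in B, f k u := by
          rw [Finset.prod_mul_distrib, Finset.prod_const, Finset.card_univ, Fintype.card_fin,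
            mul_assoc]
  calc (∫⁻ z in S, (∏ k, f k (z k)) / ENNReal.ofReal ((∑ k, dist x (z k)) ^ (m * n)))
      ≤ ∫⁻ z in ⋃ j, A j, (∏ k, f k (z k)) / ENNReal.ofReal ((∑ k, dist x (z k)) ^ (m * n)) :=
        lintegral_mono_set hcover
    _ ≤ ∑' j : ℕ, ∫⁻ z in A j,
          (∏ k, f k (z k)) / ENNReal.ofReal ((∑ k, dist x (z k)) ^ (m * n)) :=
        lintegral_iUnion_le _ _
    _ ≤ ∑' j : ℕ, ENNReal.ofReal ((4:ℝ) ^ (m*n) * V.toReal ^ m) *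
          ∏ k, (volume (ball y ((2:ℝ)^(j+2) * r)))⁻¹ *
            ∫⁻ u in ball y ((2:ℝ)^(j+2) * r), f k u :=
        ENNReal.tsum_le_tsum hterm
    _ = ENNReal.ofReal ((4:ℝ) ^ (m*n) * V.toReal ^ m) *
          ∑' j : ℕ, ∏ k, (volume (ball y ((2:ℝ)^(j+2) * r)))⁻¹ *
            ∫⁻ u in ball y ((2:ℝ)^(j+2) * r), f k u := ENNReal.tsum_mul_left
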